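/- Let n ≥ 1. There is exactly one binary operation ∘ on the finite chain C_n = {0,…,n} satisfying (S1), (S2), and (S3), namely σ_n(a, b) = 0 if a = 0 and σ_n(a, b) = b if a ≠ 0. -/

import Mathlib

/-- The finite chain effect algebra `C_n = {0, 1, …, n}` with `i ⊕ j = i + j`
when `i + j ≤ n`. -/
def Chain (n : ℕ) : Type := {k : ℕ // k ≤ n}

/-- A self-map of `C_n` is additive if `L (i + j) = L i + L j` whenever `i + j ≤ n`. -/
def ChainAdditive {n : ℕ} (L : Chain n → Chain n) : Prop :=
  ∀ i j k : Chain n, i.val + j.val = k.val → (L k).val = (L i).val + (L j).val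

/-- the top element `n` of `C_n`. -/
def ChainTop (n : ℕ) : Chain n := ⟨n, le_refl n⟩

/-- (S1) on `C_n`: every left translation is additive. -/
def ChainS1 {n : ℕ} (op : Chain n → Chain n → Chain n) : Prop :=
  ∀ a : Chain n, ChainAdditive (op a)

/-- (S2) on `C_n`: `n ∘ b = b`. -/
def ChainS2 {n : ℕ} (op : Chain n → Chain n → Chain n) : Prop :=
  ∀ b : Chain n, op (ChainTop n) b = b

/-- (S3) on `C_n`: `a ∘ b = 0` implies `b ∘ a = 0`. -/
def ChainS3 {n : ℕ} (op : Chain n → Chain n → Chain n) : Prop :=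
  ∀ a b : Chain n, (op a b).val = 0 → (op b a).val = 0

/-- for `n ≥ 1`, a binary operation on `C_n` satisfies (S1)-(S3) iff it
is the operation `σ_n (a, b) = 0` for `a = 0` and `σ_n (a, b) = b` for `a ≠ 0`; in
particular there is exactly one (S1)-(S3) operation on `C_n`. -/
theorem chain_S1S3_unique (n : ℕ) (hn : 1 ≤ n) :
    ∀ op : Chain n → Chain n → Chain n,
      (ChainS1 op ∧ ChainS2 op ∧ ChainS3 op) ↔
        (∀ a b : Chain n, op a b = if a.val = 0 then ⟨0, Nat.zero_le n⟩ else b) := by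
  -- dichotomy for additive maps
  have dich : ∀ L : Chain n → Chain n, ChainAdditive L →
      (∀ b : Chain n, (L b).val = 0) ∨ (∀ b : Chain n, L b = b) := by
    intro L hL
    set c := (L ⟨1, hn⟩).val with hc
    have key : ∀ m : ℕ, ∀ h : m ≤ n, (L ⟨m, h⟩).val = m * c := by
      intro m
      induction m with
      | zero =>
        intro h
        have := hL ⟨0, h⟩ ⟨0, h⟩ ⟨0, h⟩ rfl
        omega
      | succ m ih =>
        intro h
        have hm : m ≤ n := Nat.le_of_succ_le h
        have h2 := hL ⟨m, hm⟩ ⟨1, hn⟩ ⟨m + 1, h⟩ rfl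
        rw [ih hm] at h2
        rw [h2]; ring
    have hcle : c ≤ 1 := by
      have h1 := key n (le_refl n)
      have h2 := (L ⟨n, le_refl n⟩).2
      nlinarith
    rcases Nat.le_one_iff_eq_zero_or_eq_one.mp hcle with h0 | h1
    · left
      intro b
      have := key b.val b.2
      simp [h0] at this; exact this
    · right
      intro b
      have := key b.val b.2
      exact Subtype.ext (by simp [h1] at this; exact this)
  intro op
  constructor
  · rintro ⟨hS1, hS2, hS3⟩ a b
    have hzero : ∀ x : Chain n, (op x ⟨0, Nat.zero_le n⟩).val = 0 := by
      intro x
      have := hS1 x ⟨0, Nat.zero_le n⟩ ⟨0, Nat.zero_le n⟩ ⟨0, Nat.zero_le n⟩ rfl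
      omega
    by_cases ha : a.val = 0
    · simp only [ha, if_pos]
      have ha' : a = ⟨0, Nat.zero_le n⟩ := Subtype.ext ha
      have : (op a b).val = 0 := by
        apply hS3
        rw [ha']
        exact hzero b
      exact Subtype.ext this
    · simp only [ha, if_neg, if_false]
      rcases dich (op a) (hS1 a) with h0 | hid
      · exfalso
        have h1 : (op (ChainTop n) a).val = 0 := hS3 a (ChainTop n) (h0 (ChainTop n))
        rw [hS2 a] at h1
        exact ha h1
      · exact hid b
  · intro h
    refine ⟨?_, ?_, ?_⟩
    · intro a i j k hij
      rw [h a i, h a j, h a k]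
      by_cases ha : a.val = 0 <;> simp [ha, hij]
    · intro b
      rw [h (ChainTop n) b]
      have : (ChainTop n).val = n := rfl
      exact if_neg (by rw [this]; omega)
    · intro a b hab
      rw [h a b] at hab
      rw [h b a]
      by_cases ha : a.val = 0 <;> by_cases hb : b.val = 0 <;>
        simp_all
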